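/- Let A be an n×m complex matrix with p ≤ q, let ρ be the maximal entry absolute value, and suppose every entry of absolute value ρ is the only nonzero entry of its row and column. Let C be obtained from A by zeroing all entries of absolute value ρ. Then ‖A‖_{p,q} = max(ρ, ‖C‖_{p,q}). -/

import Mathlib

open scoped BigOperators ENNReal

/-- The Hölder `ℓ_p` norm of a vector in `ℂ^m`, for `p ∈ [1,∞]`. -/
noncomputable def lpNorm {m : ℕ} (p : ℝ≥0∞) (x : Fin m → ℂ) : ℝ :=
  if p = ⊤ then ⨆ i, ‖x i‖ else (∑ i, ‖x i‖ ^ p.toReal) ^ (1 / p.toReal)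

/-- The operator norm of an `n × m` complex matrix induced by `ℓ_p` on `ℂ^m`
and `ℓ_q` on `ℂ^n`. -/
noncomputable def opNorm {n m : ℕ} (p q : ℝ≥0∞) (A : Matrix (Fin n) (Fin m) ℂ) : ℝ :=
  ⨆ x : {x : Fin m → ℂ // x ≠ 0}, lpNorm q (A.mulVec x.1) / lpNorm p x.1

/-- The operator norm of an `n × m` complex matrix induced by general norms
`μ` on `ℂ^m` and `ν` on `ℂ^n`. -/
noncomputable def opNormGen {n m : ℕ} (μ : (Fin m → ℂ) → ℝ) (ν : (Fin n → ℂ) → ℝ)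
    (A : Matrix (Fin n) (Fin m) ℂ) : ℝ :=
  ⨆ x : {x : Fin m → ℂ // x ≠ 0}, ν (A.mulVec x.1) / μ x.1

private lemma one_le_toReal' {p : ℝ≥0∞} (hp : 1 ≤ p) (hpt : p ≠ ⊤) : 1 ≤ p.toReal := by
  simpa using ENNReal.toReal_mono hpt hp

private lemma rpow_add_le' {a b t : ℝ} (ha : 0 ≤ a) (hb : 0 ≤ b) (ht : 1 ≤ t) :
    a ^ t + b ^ t ≤ (a + b) ^ t := by
  have h := NNReal.add_rpow_le_rpow_add a.toNNReal b.toNNReal ht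
  have h2 := NNReal.coe_le_coe.2 h
  push_cast [NNReal.coe_rpow] at h2
  rwa [Real.coe_toNNReal a ha, Real.coe_toNNReal b hb] at h2

private lemma sum_rpow_le_rpow_sum' {ι : Type*} (s : Finset ι) (f : ι → ℝ)
    (hf : ∀ i ∈ s, 0 ≤ f i) {t : ℝ} (ht : 1 ≤ t) :
    ∑ i ∈ s, f i ^ t ≤ (∑ i ∈ s, f i) ^ t := by
  classical
  induction s using Finset.induction with
  | empty => simp [Real.zero_rpow (by linarith : t ≠ 0)]
  | insert a s' ha ih =>
    rw [Finset.sum_insert ha, Finset.sum_insert ha]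
    have h0 : 0 ≤ f a := hf a (Finset.mem_insert_self a s')
    have hs0 : 0 ≤ ∑ i ∈ s', f i :=
      Finset.sum_nonneg fun i hi => hf i (Finset.mem_insert_of_mem hi)
    calc f a ^ t + ∑ i ∈ s', f i ^ t
        ≤ f a ^ t + (∑ i ∈ s', f i) ^ t := by
          have := ih (fun i hi => hf i (Finset.mem_insert_of_mem hi))
          linarith
      _ ≤ (f a + ∑ i ∈ s', f i) ^ t := rpow_add_le' h0 hs0 ht

private lemma lpNorm_nonneg' {m : ℕ} (p : ℝ≥0∞) (x : Fin m → ℂ) : 0 ≤ lpNorm p x := by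
  unfold lpNorm
  split_ifs
  · exact Real.iSup_nonneg fun i => norm_nonneg _
  · exact Real.rpow_nonneg
      (Finset.sum_nonneg fun i _ => Real.rpow_nonneg (norm_nonneg _) _) _

private lemma le_lpNorm' {m : ℕ} {p : ℝ≥0∞} (hp : 1 ≤ p) (x : Fin m → ℂ) (j : Fin m) :
    ‖x j‖ ≤ lpNorm p x := by
  unfold lpNorm
  split_ifs with h
  · exact le_ciSup (f := fun i => ‖x i‖) (Set.Finite.bddAbove (Set.finite_range _)) j
  · have hr : 1 ≤ p.toReal := one_le_toReal' hp h
    have hr0 : p.toReal ≠ 0 := by linarith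
    calc ‖x j‖ = (‖x j‖ ^ p.toReal) ^ (1 / p.toReal) := by
          rw [one_div, Real.rpow_rpow_inv (norm_nonneg _) hr0]
      _ ≤ _ := Real.rpow_le_rpow (Real.rpow_nonneg (norm_nonneg _) _)
          (Finset.single_le_sum (fun i _ => Real.rpow_nonneg (norm_nonneg _) _)
            (Finset.mem_univ j)) (by positivity)

private lemma lpNorm_pos' {m : ℕ} {p : ℝ≥0∞} (hp : 1 ≤ p) (x : Fin m → ℂ) (hx : x ≠ 0) :
    0 < lpNorm p x := by
  obtain ⟨j, hj⟩ := Function.ne_iff.1 hx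
  exact lt_of_lt_of_le (by simpa using hj) (le_lpNorm' hp x j)

private lemma lpNorm_mono' {m : ℕ} (p : ℝ≥0∞) {x y : Fin m → ℂ}
    (h : ∀ j, ‖x j‖ ≤ ‖y j‖) : lpNorm p x ≤ lpNorm p y := by
  unfold lpNorm
  split_ifs
  · exact Real.iSup_le
      (fun j => (h j).trans (le_ciSup (f := fun i => ‖y i‖) (Set.Finite.bddAbove (Set.finite_range _)) j))
      (Real.iSup_nonneg fun j => norm_nonneg _)
  · exact Real.rpow_le_rpow
      (Finset.sum_nonneg fun i _ => Real.rpow_nonneg (norm_nonneg _) _)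
      (Finset.sum_le_sum fun i _ =>
        Real.rpow_le_rpow (norm_nonneg _) (h i) ENNReal.toReal_nonneg)
      (by positivity)

private lemma lpNorm_zero' {m : ℕ} {p : ℝ≥0∞} (hp : 1 ≤ p) :
    lpNorm p (0 : Fin m → ℂ) = 0 := by
  unfold lpNorm
  split_ifs with h
  · refine le_antisymm (Real.iSup_le (fun i => by simp) le_rfl)
      (Real.iSup_nonneg fun i => norm_nonneg _)
  · have hr : 1 ≤ p.toReal := one_le_toReal' hp h
    have hr0 : p.toReal ≠ 0 := by linarith
    simp only [Pi.zero_apply, norm_zero, Real.zero_rpow hr0, Finset.sum_const_zero]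
    rw [Real.zero_rpow (one_div_ne_zero hr0)]

private lemma lpNorm_le_sum' {n : ℕ} {q : ℝ≥0∞} (hq : 1 ≤ q) (y : Fin n → ℂ) :
    lpNorm q y ≤ ∑ i, ‖y i‖ := by
  unfold lpNorm
  split_ifs with h
  · exact Real.iSup_le
      (fun i => Finset.single_le_sum (fun i _ => norm_nonneg _) (Finset.mem_univ i))
      (Finset.sum_nonneg fun i _ => norm_nonneg _)
  · have hr : 1 ≤ q.toReal := one_le_toReal' hq h
    have hr0 : q.toReal ≠ 0 := by linarith
    have hsn : 0 ≤ ∑ i, ‖y i‖ := Finset.sum_nonneg fun i _ => norm_nonneg _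
    calc (∑ i, ‖y i‖ ^ q.toReal) ^ (1 / q.toReal)
        ≤ ((∑ i, ‖y i‖) ^ q.toReal) ^ (1 / q.toReal) :=
          Real.rpow_le_rpow
            (Finset.sum_nonneg fun i _ => Real.rpow_nonneg (norm_nonneg _) _)
            (sum_rpow_le_rpow_sum' _ _ (fun i _ => norm_nonneg _) hr) (by positivity)
      _ = ∑ i, ‖y i‖ := by rw [one_div, Real.rpow_rpow_inv hsn hr0]

private lemma norm_mulVec_le' {n m : ℕ} {p : ℝ≥0∞} (hp : 1 ≤ p)
    (B : Matrix (Fin n) (Fin m) ℂ) (x : Fin m → ℂ) (i : Fin n) :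
    ‖B.mulVec x i‖ ≤ (∑ j, ‖B i j‖) * lpNorm p x := by
  calc ‖B.mulVec x i‖ = ‖∑ j, B i j * x j‖ := by
        simp [Matrix.mulVec, dotProduct]
    _ ≤ ∑ j, ‖B i j * x j‖ := norm_sum_le _ _
    _ = ∑ j, ‖B i j‖ * ‖x j‖ := by simp [norm_mul]
    _ ≤ ∑ j, ‖B i j‖ * lpNorm p x := Finset.sum_le_sum fun j _ =>
        mul_le_mul_of_nonneg_left (le_lpNorm' hp x j) (norm_nonneg _)
    _ = _ := by rw [← Finset.sum_mul]

private lemma lpNorm_mulVec_le' {n m : ℕ} {p q : ℝ≥0∞} (hp : 1 ≤ p) (hq : 1 ≤ q)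
    (B : Matrix (Fin n) (Fin m) ℂ) (x : Fin m → ℂ) :
    lpNorm q (B.mulVec x) ≤ (∑ i, ∑ j, ‖B i j‖) * lpNorm p x := by
  calc lpNorm q (B.mulVec x) ≤ ∑ i, ‖B.mulVec x i‖ := lpNorm_le_sum' hq _
    _ ≤ ∑ i, (∑ j, ‖B i j‖) * lpNorm p x :=
        Finset.sum_le_sum fun i _ => norm_mulVec_le' hp B x i
    _ = _ := by rw [← Finset.sum_mul]

private lemma opNorm_bdd' {n m : ℕ} {p q : ℝ≥0∞} (hp : 1 ≤ p) (hq : 1 ≤ q)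
    (B : Matrix (Fin n) (Fin m) ℂ) :
    BddAbove (Set.range fun x : {x : Fin m → ℂ // x ≠ 0} =>
      lpNorm q (B.mulVec x.1) / lpNorm p x.1) := by
  refine ⟨∑ i, ∑ j, ‖B i j‖, ?_⟩
  rintro _ ⟨x, rfl⟩
  rw [div_le_iff₀ (lpNorm_pos' hp x.1 x.2)]
  exact lpNorm_mulVec_le' hp hq B x.1

private lemma opNorm_nonneg' {n m : ℕ} (p q : ℝ≥0∞) (B : Matrix (Fin n) (Fin m) ℂ) :
    0 ≤ opNorm p q B :=
  Real.iSup_nonneg fun x => div_nonneg (lpNorm_nonneg' _ _) (lpNorm_nonneg' _ _)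

private lemma ratio_le_opNorm' {n m : ℕ} {p q : ℝ≥0∞} (hp : 1 ≤ p) (hq : 1 ≤ q)
    (B : Matrix (Fin n) (Fin m) ℂ) (x : Fin m → ℂ) (hx : x ≠ 0) :
    lpNorm q (B.mulVec x) / lpNorm p x ≤ opNorm p q B :=
  le_ciSup (opNorm_bdd' hp hq B) (⟨x, hx⟩ : {x : Fin m → ℂ // x ≠ 0})

private lemma lpNorm_mulVec_le_opNorm' {n m : ℕ} {p q : ℝ≥0∞} (hp : 1 ≤ p) (hq : 1 ≤ q)
    (B : Matrix (Fin n) (Fin m) ℂ) (x : Fin m → ℂ) :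
    lpNorm q (B.mulVec x) ≤ opNorm p q B * lpNorm p x := by
  by_cases hx : x = 0
  · subst hx
    rw [Matrix.mulVec_zero, lpNorm_zero' hq, lpNorm_zero' hp, mul_zero]
  · have h := ratio_le_opNorm' hp hq B x hx
    rwa [div_le_iff₀ (lpNorm_pos' hp x hx)] at h

private lemma opNorm_le' {n m : ℕ} {p q : ℝ≥0∞} (hp : 1 ≤ p)
    (B : Matrix (Fin n) (Fin m) ℂ) {M : ℝ} (hM : 0 ≤ M)
    (h : ∀ x : Fin m → ℂ, x ≠ 0 → lpNorm q (B.mulVec x) ≤ M * lpNorm p x) :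
    opNorm p q B ≤ M := by
  refine Real.iSup_le (fun x => ?_) hM
  rw [div_le_iff₀ (lpNorm_pos' hp x.1 x.2)]
  exact h x.1 x.2

private lemma lpNorm_single' {m : ℕ} {p : ℝ≥0∞} (hp : 1 ≤ p) (x : Fin m → ℂ) (j : Fin m)
    (hx : ∀ j', j' ≠ j → x j' = 0) : lpNorm p x = ‖x j‖ := by
  unfold lpNorm
  split_ifs with h
  · refine le_antisymm (Real.iSup_le (fun i => ?_) (norm_nonneg _))
      (le_ciSup (f := fun i => ‖x i‖) (Set.Finite.bddAbove (Set.finite_range _)) j)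
    by_cases hij : i = j
    · subst hij; exact le_rfl
    · rw [hx i hij]; simp
  · have hr : 1 ≤ p.toReal := one_le_toReal' hp h
    have hr0 : p.toReal ≠ 0 := by linarith
    rw [Finset.sum_eq_single j (fun i _ hij => by rw [hx i hij]; simp [Real.zero_rpow hr0])
      (fun hj => absurd (Finset.mem_univ j) hj)]
    rw [one_div, Real.rpow_rpow_inv (norm_nonneg _) hr0]

private lemma lpNorm_top_le {n : ℕ} {y : Fin n → ℂ} {a : ℝ}
    (h : ∀ i, ‖y i‖ ≤ a) (ha : 0 ≤ a) : lpNorm ⊤ y ≤ a := by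
  unfold lpNorm
  rw [if_pos rfl]
  exact Real.iSup_le h ha

/-- Equation (3.2): if `p ≤ q` and every entry of maximal absolute value `ρ`
is the only nonzero entry of its row and column, then
`‖A‖_{p,q} = max (ρ, ‖C‖_{p,q})`, where `C` is obtained from `A` by zeroing
all entries of absolute value `ρ`. -/
theorem stmt_14 {n m : ℕ} (A : Matrix (Fin n) (Fin m) ℂ) (p q : ℝ≥0∞)
    (hp : 1 ≤ p) (hpq : p ≤ q) (ρ : ℝ)
    (hρ : IsGreatest {t : ℝ | ∃ i j, t = ‖A i j‖} ρ)
    (hi : ∀ i j, ‖A i j‖ = ρ →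
      (∀ j', j' ≠ j → A i j' = 0) ∧ (∀ i', i' ≠ i → A i' j = 0)) :
    opNorm p q A =
      max ρ (opNorm p q (Matrix.of fun i j => if ‖A i j‖ = ρ then 0 else A i j)) := by
  classical
  obtain ⟨⟨i0, j0, hij0⟩, hub⟩ := hρ
  have hub' : ∀ i j, ‖A i j‖ ≤ ρ := fun i j => hub ⟨i, j, rfl⟩
  have hρ0 : 0 ≤ ρ := by rw [hij0]; exact norm_nonneg _
  have hq : 1 ≤ q := le_trans hp hpq
  set C : Matrix (Fin n) (Fin m) ℂ :=
    Matrix.of fun i j => if ‖A i j‖ = ρ then 0 else A i j with hCdef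
  have hC : ∀ i j, C i j = if ‖A i j‖ = ρ then 0 else A i j := fun i j => rfl
  rcases eq_or_lt_of_le hρ0 with hρz | hρpos
  · -- ρ = 0, so A = 0 and C = A
    have hA0 : ∀ i j, A i j = 0 := fun i j => norm_le_zero_iff.1 (hρz ▸ hub' i j)
    have hCA : C = A := by
      ext i j
      rw [hC]
      split_ifs with h
      · exact (hA0 i j).symm
      · rfl
    rw [hCA, ← hρz, max_eq_right (opNorm_nonneg' p q A)]
  · -- ρ > 0
    have hnorm0 : ‖A i0 j0‖ = ρ := hij0.symm
    set S : Fin m → Prop := fun j => ∃ i, ‖A i j‖ = ρ with hSdef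
    have hCcol : ∀ i j, S j → C i j = 0 := by
      rintro i j ⟨i1, hi1⟩
      rw [hC]
      split_ifs with h
      · rfl
      · have hne : i ≠ i1 := fun he => h (he ▸ hi1)
        exact (hi i1 j hi1).2 i hne
    have hCx : ∀ x : Fin m → ℂ,
        C.mulVec x = C.mulVec (fun j => if S j then 0 else x j) := by
      intro x
      funext i
      simp only [Matrix.mulVec, dotProduct]
      refine Finset.sum_congr rfl fun j _ => ?_
      by_cases hs : S j
      · rw [hCcol i j hs]; simp
      · simp [hs]
    have hxRle : ∀ x : Fin m → ℂ,
        lpNorm p (fun j => if S j then 0 else x j) ≤ lpNorm p x := by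
      intro x
      apply lpNorm_mono'
      intro j
      by_cases hs : S j <;> simp [hs]
    -- Part 1 : ρ ≤ opNorm p q A
    have part1 : ρ ≤ opNorm p q A := by
      set e : Fin m → ℂ := fun j => if j = j0 then 1 else 0 with he
      have he0 : e ≠ 0 := by
        intro h
        have := congrFun h j0
        simp [he] at this
      have hAe : A.mulVec e = fun i => A i j0 := by
        funext i
        simp [Matrix.mulVec, dotProduct, he, mul_ite]
      have hlpe : lpNorm p e = 1 := by
        rw [lpNorm_single' hp e j0 (fun j' hj' => by simp [he, hj'])]
        simp [he]
      have hlpAe : lpNorm q (A.mulVec e) = ρ := by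
        rw [hAe, lpNorm_single' hq _ i0 (fun i' hi' => (hi i0 j0 hnorm0).2 i' hi')]
        exact hnorm0
      have h := ratio_le_opNorm' hp hq A e he0
      rwa [hlpAe, hlpe, div_one] at h
    -- Part 2 : opNorm p q C ≤ opNorm p q A
    have part2 : opNorm p q C ≤ opNorm p q A := by
      apply opNorm_le' hp C (opNorm_nonneg' p q A)
      intro x hx
      set xR : Fin m → ℂ := fun j => if S j then 0 else x j with hxRdef
      have hACxR : A.mulVec xR = C.mulVec xR := by
        funext i
        simp only [Matrix.mulVec, dotProduct]
        refine Finset.sum_congr rfl fun j _ => ?_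
        by_cases h : ‖A i j‖ = ρ
        · have hSj : S j := ⟨i, h⟩
          simp [hxRdef, hSj]
        · rw [hC, if_neg h]
      calc lpNorm q (C.mulVec x) = lpNorm q (A.mulVec xR) := by rw [hCx x, ← hACxR]
        _ ≤ opNorm p q A * lpNorm p xR := lpNorm_mulVec_le_opNorm' hp hq A xR
        _ ≤ opNorm p q A * lpNorm p x :=
            mul_le_mul_of_nonneg_left (hxRle x) (opNorm_nonneg' p q A)
    -- Part 3 : opNorm p q A ≤ max ρ (opNorm p q C)
    have part3 : opNorm p q A ≤ max ρ (opNorm p q C) := by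
      set M := max ρ (opNorm p q C) with hM
      have hM0 : 0 ≤ M := le_trans hρ0 (le_max_left _ _)
      have hρM : ρ ≤ M := le_max_left _ _
      have hCM : opNorm p q C ≤ M := le_max_right _ _
      apply opNorm_le' hp A hM0
      intro x hx
      set R : Fin n → Prop := fun i => ∃ j, ‖A i j‖ = ρ with hRdef
      have hrow : ∀ i : Fin n, ∃ j, R i →
          (‖A i j‖ = ρ ∧ (∀ j', j' ≠ j → A i j' = 0) ∧ S j) := by
        intro i
        by_cases h : R i
        · obtain ⟨j, hj⟩ := h
          exact ⟨j, fun _ => ⟨hj, (hi i j hj).1, ⟨i, hj⟩⟩⟩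
        · exact ⟨j0, fun h' => absurd h' h⟩
      choose jsel hjsel using hrow
      have hAx_row : ∀ i, R i → A.mulVec x i = A i (jsel i) * x (jsel i) := by
        intro i h
        simp only [Matrix.mulVec, dotProduct]
        exact Finset.sum_eq_single (jsel i)
          (fun j _ hj => by rw [(hjsel i h).2.1 j hj, zero_mul])
          (fun hj => absurd (Finset.mem_univ _) hj)
      have hAx_notrow : ∀ i, ¬R i → A.mulVec x i = C.mulVec x i := by
        intro i h
        simp only [Matrix.mulVec, dotProduct]
        refine Finset.sum_congr rfl fun j _ => ?_
        rw [hC, if_neg (fun hh => h ⟨j, hh⟩)]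
      by_cases hqt : q = ⊤
      · subst hqt
        have hCb := lpNorm_mulVec_le_opNorm' hp hq C x
        refine lpNorm_top_le (fun i => ?_) (mul_nonneg hM0 (lpNorm_nonneg' _ _))
        by_cases h : R i
        · rw [hAx_row i h, norm_mul, (hjsel i h).1]
          calc ρ * ‖x (jsel i)‖ ≤ ρ * lpNorm p x :=
                mul_le_mul_of_nonneg_left (le_lpNorm' hp x _) hρ0
            _ ≤ M * lpNorm p x :=
                mul_le_mul_of_nonneg_right hρM (lpNorm_nonneg' _ _)
        · rw [hAx_notrow i h]
          calc ‖C.mulVec x i‖ ≤ lpNorm ⊤ (C.mulVec x) := le_lpNorm' hq _ i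
            _ ≤ opNorm p ⊤ C * lpNorm p x := hCb
            _ ≤ M * lpNorm p x :=
                mul_le_mul_of_nonneg_right hCM (lpNorm_nonneg' _ _)
      · have hpt : p ≠ ⊤ := fun h => hqt (top_le_iff.1 (h ▸ hpq))
        set r := p.toReal with hrdef
        set s := q.toReal with hsdef
        have hr1 : 1 ≤ r := one_le_toReal' hp hpt
        have hs1 : 1 ≤ s := one_le_toReal' hq hqt
        have hrs : r ≤ s := ENNReal.toReal_mono hqt hpq
        have hr0 : r ≠ 0 := by linarith
        have hs0 : s ≠ 0 := by linarith
        have ht1 : 1 ≤ s / r := (one_le_div (by linarith)).2 hrs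
        have hlpA : lpNorm q (A.mulVec x) = (∑ i, ‖A.mulVec x i‖ ^ s) ^ (1/s) := by
          unfold lpNorm
          rw [if_neg hqt]
        have hlpx : lpNorm p x = (∑ j, ‖x j‖ ^ r) ^ (1/r) := by
          unfold lpNorm
          rw [if_neg hpt]
        set xR : Fin m → ℂ := fun j => if S j then 0 else x j with hxRdef
        set A' := ∑ j ∈ Finset.univ.filter S, ‖x j‖ ^ r with hA'def
        set B' := ∑ j ∈ Finset.univ.filter (fun j => ¬ S j), ‖x j‖ ^ r with hB'def
        have hA'0 : 0 ≤ A' :=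
          Finset.sum_nonneg fun j _ => Real.rpow_nonneg (norm_nonneg _) _
        have hB'0 : 0 ≤ B' :=
          Finset.sum_nonneg fun j _ => Real.rpow_nonneg (norm_nonneg _) _
        have hsum : A' + B' = ∑ j, ‖x j‖ ^ r :=
          Finset.sum_filter_add_sum_filter_not _ _ _
        have hxRnorm : lpNorm p xR = B' ^ (1/r) := by
          unfold lpNorm
          rw [if_neg hpt]
          congr 1
          rw [← Finset.sum_filter_add_sum_filter_not Finset.univ S]
          have h1 : ∑ j ∈ Finset.univ.filter S, ‖xR j‖ ^ r = 0 :=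
            Finset.sum_eq_zero fun j hj => by
              have hSj := (Finset.mem_filter.1 hj).2
              simp [hxRdef, hSj, Real.zero_rpow hr0]
          have h2 : ∑ j ∈ Finset.univ.filter (fun j => ¬ S j), ‖xR j‖ ^ r = B' :=
            Finset.sum_congr rfl fun j hj => by
              have hSj := (Finset.mem_filter.1 hj).2
              simp [hxRdef, hSj]
          rw [h1, h2, zero_add]
        suffices hkey : ∑ i, ‖A.mulVec x i‖ ^ s ≤ (M * lpNorm p x) ^ s by
          rw [hlpA]
          calc (∑ i, ‖A.mulVec x i‖ ^ s) ^ (1/s)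
              ≤ ((M * lpNorm p x) ^ s) ^ (1/s) :=
                Real.rpow_le_rpow
                  (Finset.sum_nonneg fun i _ => Real.rpow_nonneg (norm_nonneg _) _)
                  hkey (by positivity)
            _ = M * lpNorm p x := by
                rw [one_div, Real.rpow_rpow_inv
                  (mul_nonneg hM0 (lpNorm_nonneg' _ _)) hs0]
        have hT : ∑ i ∈ Finset.univ.filter R, ‖A.mulVec x i‖ ^ s
            ≤ ρ ^ s * A' ^ (s/r) := by
          have step1 : ∀ i ∈ Finset.univ.filter R,
              ‖A.mulVec x i‖ ^ s = ρ ^ s * ‖x (jsel i)‖ ^ s := fun i hi' => by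
            have h := (Finset.mem_filter.1 hi').2
            rw [hAx_row i h, norm_mul, (hjsel i h).1,
              Real.mul_rpow hρ0 (norm_nonneg _)]
          rw [Finset.sum_congr rfl step1, ← Finset.mul_sum]
          refine mul_le_mul_of_nonneg_left ?_ (Real.rpow_nonneg hρ0 _)
          have hinj : ∀ i1 ∈ Finset.univ.filter R, ∀ i2 ∈ Finset.univ.filter R,
              jsel i1 = jsel i2 → i1 = i2 := by
            intro i1 h1 i2 h2 hj
            have hR1 := (Finset.mem_filter.1 h1).2
            have hR2 := (Finset.mem_filter.1 h2).2
            by_contra hne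
            have h0 : A i2 (jsel i1) = 0 :=
              (hi i1 (jsel i1) (hjsel i1 hR1).1).2 i2 (Ne.symm hne)
            have hρ2 := (hjsel i2 hR2).1
            rw [← hj, h0, norm_zero] at hρ2
            exact absurd hρ2 (ne_of_lt hρpos)
          calc ∑ i ∈ Finset.univ.filter R, ‖x (jsel i)‖ ^ s
              = ∑ j ∈ (Finset.univ.filter R).image jsel, ‖x j‖ ^ s :=
                (Finset.sum_image (f := fun j => ‖x j‖ ^ s) hinj).symm
            _ ≤ ∑ j ∈ Finset.univ.filter S, ‖x j‖ ^ s := by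
                refine Finset.sum_le_sum_of_subset_of_nonneg ?_
                  (fun j _ _ => Real.rpow_nonneg (norm_nonneg _) _)
                intro j hj
                obtain ⟨i, hiT, rfl⟩ := Finset.mem_image.1 hj
                exact Finset.mem_filter.2
                  ⟨Finset.mem_univ _, (hjsel i (Finset.mem_filter.1 hiT).2).2.2⟩
            _ = ∑ j ∈ Finset.univ.filter S, (‖x j‖ ^ r) ^ (s/r) :=
                Finset.sum_congr rfl fun j _ => by
                  rw [← Real.rpow_mul (norm_nonneg _)]
                  congr 1
                  field_simp
            _ ≤ A' ^ (s/r) := sum_rpow_le_rpow_sum' _ _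
                (fun j _ => Real.rpow_nonneg (norm_nonneg _) _) ht1
        have hTc : ∑ i ∈ Finset.univ.filter (fun i => ¬ R i), ‖A.mulVec x i‖ ^ s
            ≤ (opNorm p q C) ^ s * B' ^ (s/r) := by
          have hCle : lpNorm q (C.mulVec x) ≤ opNorm p q C * B' ^ (1/r) := by
            rw [hCx x, ← hxRnorm]
            exact lpNorm_mulVec_le_opNorm' hp hq C xR
          have hCsum : (∑ i, ‖C.mulVec x i‖ ^ s) = (lpNorm q (C.mulVec x)) ^ s := by
            unfold lpNorm
            rw [if_neg hqt, one_div, Real.rpow_inv_rpow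
              (Finset.sum_nonneg fun i _ => Real.rpow_nonneg (norm_nonneg _) _) hs0]
          calc ∑ i ∈ Finset.univ.filter (fun i => ¬ R i), ‖A.mulVec x i‖ ^ s
              = ∑ i ∈ Finset.univ.filter (fun i => ¬ R i), ‖C.mulVec x i‖ ^ s :=
                Finset.sum_congr rfl fun i hi' => by
                  rw [hAx_notrow i (Finset.mem_filter.1 hi').2]
            _ ≤ ∑ i, ‖C.mulVec x i‖ ^ s :=
                Finset.sum_le_sum_of_subset_of_nonneg (Finset.filter_subset _ _)
                  (fun i _ _ => Real.rpow_nonneg (norm_nonneg _) _)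
            _ = (lpNorm q (C.mulVec x)) ^ s := hCsum
            _ ≤ (opNorm p q C * B' ^ (1/r)) ^ s :=
                Real.rpow_le_rpow (lpNorm_nonneg' _ _) hCle (by linarith)
            _ = (opNorm p q C) ^ s * B' ^ (s/r) := by
                rw [Real.mul_rpow (opNorm_nonneg' p q C) (Real.rpow_nonneg hB'0 _),
                  ← Real.rpow_mul hB'0]
                congr 2
                field_simp
        calc ∑ i, ‖A.mulVec x i‖ ^ s
            = ∑ i ∈ Finset.univ.filter R, ‖A.mulVec x i‖ ^ s
              + ∑ i ∈ Finset.univ.filter (fun i => ¬ R i), ‖A.mulVec x i‖ ^ s :=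
              (Finset.sum_filter_add_sum_filter_not _ _ _).symm
          _ ≤ ρ ^ s * A' ^ (s/r) + (opNorm p q C) ^ s * B' ^ (s/r) := add_le_add hT hTc
          _ ≤ M ^ s * A' ^ (s/r) + M ^ s * B' ^ (s/r) := add_le_add
              (mul_le_mul_of_nonneg_right
                (Real.rpow_le_rpow hρ0 hρM (by linarith)) (Real.rpow_nonneg hA'0 _))
              (mul_le_mul_of_nonneg_right
                (Real.rpow_le_rpow (opNorm_nonneg' p q C) hCM (by linarith))
                (Real.rpow_nonneg hB'0 _))
          _ = M ^ s * (A' ^ (s/r) + B' ^ (s/r)) := by ring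
          _ ≤ M ^ s * (A' + B') ^ (s/r) :=
              mul_le_mul_of_nonneg_left (rpow_add_le' hA'0 hB'0 ht1)
                (Real.rpow_nonneg hM0 _)
          _ = (M * lpNorm p x) ^ s := by
              rw [hlpx, ← hsum,
                Real.mul_rpow hM0 (Real.rpow_nonneg (by linarith) _),
                ← Real.rpow_mul (by linarith : (0:ℝ) ≤ A' + B')]
              congr 2
              field_simp
    exact le_antisymm part3 (max_le part1 part2)
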